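/- Let M be the 3 × 3 matrix with columns (1,-1,0), (-5,1,3), (0,-1,1). Then ℕ³ has exactly five M-subgraphs: the four slices {(a,b,c) ∈ ℕ³ : a+b+c = n} for n = 0,1,2,3, and the single unbounded set {(a,b,c) ∈ ℕ³ : a+b+c ≥ 4}. Consequently the space of polynomial solutions of I(M) is 4-dimensional, spanned by 1, x+y+z, (x+y+z)², (x+y+z)³. -/

import Mathlib

open MvPolynomial

/-- The positive part `w₊ ∈ ℕ^q` of an integer vector `w`. -/
noncomputable def posPart {q : ℕ} (w : Fin q → ℤ) : Fin q →₀ ℕ :=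
  Finsupp.equivFunOnFinite.symm fun i => (w i).toNat

/-- The coefficient at `u` of `∂^m f` for a polynomial `f`. -/
noncomputable def derivCoeff {q : ℕ} (m : Fin q →₀ ℕ)
    (f : MvPolynomial (Fin q) ℂ) (u : Fin q →₀ ℕ) : ℂ :=
  (∏ i, ((u i + m i).factorial : ℂ) / (u i).factorial) * f.coeff (u + m)

/-- `f` is a polynomial solution of the PDE system `I(M)`. -/
def IsSolution {q m : ℕ} (M : Matrix (Fin q) (Fin m) ℤ)
    (f : MvPolynomial (Fin q) ℂ) : Prop :=
  ∀ (j : Fin m) (u : Fin q →₀ ℕ),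
    derivCoeff (posPart fun i => M i j) f u =
    derivCoeff (posPart fun i => -(M i j)) f u

/-- Adjacency in the graph `Γ(M)` on `ℕ^q`. -/
def Medge {q m : ℕ} (M : Matrix (Fin q) (Fin m) ℤ) (u v : Fin q →₀ ℕ) : Prop :=
  ∃ j : Fin m, (∀ i, (u i : ℤ) - (v i : ℤ) = M i j) ∨
    (∀ i, (v i : ℤ) - (u i : ℤ) = M i j)

/-- The `M`-subgraph containing `u`. -/
def Mcomp {q m : ℕ} (M : Matrix (Fin q) (Fin m) ℤ) (u : Fin q →₀ ℕ) :
    Set (Fin q →₀ ℕ) :=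
  {v | Relation.ReflTransGen (Medge M) u v}

namespace MAux


noncomputable def V3 (a b c : ℕ) : Fin 3 →₀ ℕ := Finsupp.equivFunOnFinite.symm ![a, b, c]

@[simp] lemma V3_apply0 (a b c : ℕ) : V3 a b c 0 = a := rfl
@[simp] lemma V3_apply1 (a b c : ℕ) : V3 a b c 1 = b := rfl
@[simp] lemma V3_apply2 (a b c : ℕ) : V3 a b c 2 = c := rfl

lemma ext3 {a b : Fin 3 →₀ ℕ} (h0 : a 0 = b 0) (h1 : a 1 = b 1) (h2 : a 2 = b 2) : a = b := by
  ext i; fin_cases i <;> assumption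

lemma v_eq_V3 (v : Fin 3 →₀ ℕ) : v = V3 (v 0) (v 1) (v 2) := ext3 rfl rfl rfl

lemma V3_sub0 (a b c : ℕ) : V3 (a+1) b c - Finsupp.single 0 1 = V3 a b c := by
  apply ext3 <;> simp [Finsupp.tsub_apply, Finsupp.single_apply]
lemma V3_sub1 (a b c : ℕ) : V3 a (b+1) c - Finsupp.single 1 1 = V3 a b c := by
  apply ext3 <;> simp [Finsupp.tsub_apply, Finsupp.single_apply]
lemma V3_sub2 (a b c : ℕ) : V3 a b (c+1) - Finsupp.single 2 1 = V3 a b c := by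
  apply ext3 <;> simp [Finsupp.tsub_apply, Finsupp.single_apply]

noncomputable def sp : MvPolynomial (Fin 3) ℂ := X 0 + X 1 + X 2

lemma coeff_sp_pow (n a b c : ℕ) :
    ((a.factorial : ℂ) * b.factorial * c.factorial) * coeff (V3 a b c) (sp ^ n) =
      if a + b + c = n then (n.factorial : ℂ) else 0 := by
  induction n generalizing a b c with
  | zero =>
    rw [pow_zero, coeff_one]
    by_cases h : a + b + c = 0
    · obtain ⟨rfl, rfl, rfl⟩ : a = 0 ∧ b = 0 ∧ c = 0 := by omega
      have h0 : (0 : Fin 3 →₀ ℕ) = V3 0 0 0 := ext3 (by simp) (by simp) (by simp)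
      rw [if_pos h0, if_pos rfl]
      simp [Nat.factorial]
    · rw [if_neg, if_neg h]
      · simp
      · intro h0
        apply h
        have := congrArg (fun w : Fin 3 →₀ ℕ => w 0 + w 1 + w 2) h0
        simpa using this.symm
  | succ n IH =>
    have expand : sp ^ (n+1) = sp ^ n * X 0 + sp ^ n * X 1 + sp ^ n * X 2 := by
      rw [pow_succ, sp]; ring
    rw [expand, coeff_add, coeff_add]
    have t0 : ((a.factorial : ℂ) * b.factorial * c.factorial) * coeff (V3 a b c) (sp ^ n * X 0)
        = (a : ℂ) * (if a + b + c = n + 1 then (n.factorial : ℂ) else 0) := by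
      rw [coeff_mul_X']
      rcases Nat.eq_zero_or_pos a with rfl | ha
      · simp [Finsupp.mem_support_iff]
      · obtain ⟨k, rfl⟩ : ∃ k, a = k + 1 := ⟨a - 1, by omega⟩
        rw [if_pos (by simp [Finsupp.mem_support_iff]), V3_sub0]
        have := IH k b c
        rw [Nat.factorial_succ]
        push_cast
        rw [show ((k:ℂ)+1) * k.factorial * b.factorial * c.factorial * coeff (V3 k b c) (sp^n)
          = ((k:ℂ)+1) * ((k.factorial * b.factorial * c.factorial) * coeff (V3 k b c) (sp^n)) by ring,
          this]
        by_cases hd : k + b + c = n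
        · rw [if_pos hd, if_pos (by omega)]
        · rw [if_neg hd, if_neg (by omega)]
    have t1 : ((a.factorial : ℂ) * b.factorial * c.factorial) * coeff (V3 a b c) (sp ^ n * X 1)
        = (b : ℂ) * (if a + b + c = n + 1 then (n.factorial : ℂ) else 0) := by
      rw [coeff_mul_X']
      rcases Nat.eq_zero_or_pos b with rfl | hb
      · simp [Finsupp.mem_support_iff]
      · obtain ⟨k, rfl⟩ : ∃ k, b = k + 1 := ⟨b - 1, by omega⟩
        rw [if_pos (by simp [Finsupp.mem_support_iff]), V3_sub1]
        have := IH a k c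
        rw [Nat.factorial_succ]
        push_cast
        rw [show (a.factorial : ℂ) * (((k:ℂ)+1) * k.factorial) * c.factorial * coeff (V3 a k c) (sp^n)
          = ((k:ℂ)+1) * ((a.factorial * k.factorial * c.factorial) * coeff (V3 a k c) (sp^n)) by ring,
          this]
        by_cases hd : a + k + c = n
        · rw [if_pos hd, if_pos (by omega)]
        · rw [if_neg hd, if_neg (by omega)]
    have t2 : ((a.factorial : ℂ) * b.factorial * c.factorial) * coeff (V3 a b c) (sp ^ n * X 2)
        = (c : ℂ) * (if a + b + c = n + 1 then (n.factorial : ℂ) else 0) := by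
      rw [coeff_mul_X']
      rcases Nat.eq_zero_or_pos c with rfl | hc
      · simp [Finsupp.mem_support_iff]
      · obtain ⟨k, rfl⟩ : ∃ k, c = k + 1 := ⟨c - 1, by omega⟩
        rw [if_pos (by simp [Finsupp.mem_support_iff]), V3_sub2]
        have := IH a b k
        rw [Nat.factorial_succ]
        push_cast
        rw [show (a.factorial : ℂ) * b.factorial * (((k:ℂ)+1) * k.factorial) * coeff (V3 a b k) (sp^n)
          = ((k:ℂ)+1) * ((a.factorial * b.factorial * k.factorial) * coeff (V3 a b k) (sp^n)) by ring,
          this]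
        by_cases hd : a + b + k = n
        · rw [if_pos hd, if_pos (by omega)]
        · rw [if_neg hd, if_neg (by omega)]
    rw [mul_add, mul_add, t0, t1, t2]
    by_cases hd : a + b + c = n + 1
    · rw [if_pos hd, if_pos hd, Nat.factorial_succ]
      have : ((a:ℂ) + b + c) = (n + 1 : ℕ) := by push_cast [← hd]; ring
      push_cast at this ⊢
      rw [← this]; ring
    · rw [if_neg hd, if_neg hd]; ring

variable {M : Matrix (Fin 3) (Fin 3) ℤ}

lemma edge_move01 (hM : M = !![1, -5, 0; -1, 1, -1; 0, 3, 1]) (a b c : ℕ) :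
    Medge M (V3 (a+1) b c) (V3 a (b+1) c) := by
  refine ⟨0, Or.inl fun i => ?_⟩
  fin_cases i <;> simp [hM]

lemma edge_move21 (hM : M = !![1, -5, 0; -1, 1, -1; 0, 3, 1]) (a b c : ℕ) :
    Medge M (V3 a b (c+1)) (V3 a (b+1) c) := by
  refine ⟨2, Or.inl fun i => ?_⟩
  fin_cases i <;> simp [hM]

lemma edge_jump (hM : M = !![1, -5, 0; -1, 1, -1; 0, 3, 1]) (n : ℕ) :
    Medge M (V3 n 1 3) (V3 (n+5) 0 0) := by
  refine ⟨1, Or.inl fun i => ?_⟩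
  fin_cases i <;> simp [hM]

lemma medge_symm : Symmetric (Medge M) := by
  rintro u v ⟨j, h | h⟩
  · exact ⟨j, Or.inr h⟩
  · exact ⟨j, Or.inl h⟩

lemma reach_symm {u v : Fin 3 →₀ ℕ} (h : Relation.ReflTransGen (Medge M) u v) :
    Relation.ReflTransGen (Medge M) v u :=
  (@Relation.ReflTransGen.stdSymm _ _ ⟨fun a b => @medge_symm M a b⟩).symm _ _ h

lemma reach_canon (hM : M = !![1, -5, 0; -1, 1, -1; 0, 3, 1]) :
    ∀ (k : ℕ) (v : Fin 3 →₀ ℕ), v 0 + v 2 = k →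
      Relation.ReflTransGen (Medge M) v (V3 0 (v 0 + v 1 + v 2) 0) := by
  intro k
  induction k using Nat.strong_induction_on with
  | _ k IH =>
    intro v hv
    rcases Nat.eq_zero_or_pos (v 0) with h0 | h0
    · rcases Nat.eq_zero_or_pos (v 2) with h2 | h2
      · have hveq : v = V3 0 (v 0 + v 1 + v 2) 0 :=
          ext3 (by simp; omega) (by simp; omega) (by simp; omega)
        rw [← hveq]
      · obtain ⟨k2, hk2⟩ : ∃ k2, v 2 = k2 + 1 := ⟨v 2 - 1, by omega⟩
        have hveq : v = V3 (v 0) (v 1) (k2 + 1) := by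
          apply ext3 <;> simp [hk2]
        have step := edge_move21 hM (v 0) (v 1) k2
        have tail := IH (v 0 + k2) (by omega) (V3 (v 0) (v 1 + 1) k2) (by simp)
        simp only [V3_apply0, V3_apply1, V3_apply2] at tail
        have : v 0 + (v 1 + 1) + k2 = v 0 + v 1 + v 2 := by omega
        rw [this] at tail
        have step' : Medge M v (V3 (v 0) (v 1 + 1) k2) := by rw [hveq]; exact step
        exact Relation.ReflTransGen.head step' tail
    · obtain ⟨k0, hk0⟩ : ∃ k0, v 0 = k0 + 1 := ⟨v 0 - 1, by omega⟩
      have hveq : v = V3 (k0 + 1) (v 1) (v 2) := by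
        apply ext3 <;> simp [hk0]
      have step := edge_move01 hM k0 (v 1) (v 2)
      have tail := IH (k0 + v 2) (by omega) (V3 k0 (v 1 + 1) (v 2)) (by simp)
      simp only [V3_apply0, V3_apply1, V3_apply2] at tail
      have : k0 + (v 1 + 1) + v 2 = v 0 + v 1 + v 2 := by omega
      rw [this] at tail
      have step' : Medge M v (V3 k0 (v 1 + 1) (v 2)) := by rw [hveq]; exact step
      exact Relation.ReflTransGen.head step' tail

lemma reach_slice (hM : M = !![1, -5, 0; -1, 1, -1; 0, 3, 1]) {v w : Fin 3 →₀ ℕ}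
    (h : v 0 + v 1 + v 2 = w 0 + w 1 + w 2) : Relation.ReflTransGen (Medge M) v w := by
  refine (reach_canon hM _ v rfl).trans (reach_symm ?_)
  have := reach_canon hM (w 0 + w 2) w rfl
  rwa [← h] at this

lemma step_up (hM : M = !![1, -5, 0; -1, 1, -1; 0, 3, 1]) (n : ℕ) :
    Relation.ReflTransGen (Medge M) (V3 0 (n+4) 0) (V3 0 (n+5) 0) := by
  refine (reach_slice hM (v := V3 0 (n+4) 0) (w := V3 n 1 3) (by simp only [V3_apply0, V3_apply1, V3_apply2]; omega)).trans ?_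
  refine Relation.ReflTransGen.head (edge_jump hM n) ?_
  exact reach_slice hM (by simp only [V3_apply0, V3_apply1, V3_apply2]; omega)

lemma reach_up (hM : M = !![1, -5, 0; -1, 1, -1; 0, 3, 1]) (m : ℕ) (hm : 4 ≤ m) :
    ∀ k, Relation.ReflTransGen (Medge M) (V3 0 m 0) (V3 0 (m+k) 0) := by
  intro k
  induction k with
  | zero => exact Relation.ReflTransGen.refl
  | succ k IH =>
    refine IH.trans ?_
    have := step_up hM (m + k - 4)
    have h1 : m + k - 4 + 4 = m + k := by omega
    have h2 : m + k - 4 + 5 = m + (k + 1) := by omega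
    rwa [h1, h2] at this

lemma edge_deg (hM : M = !![1, -5, 0; -1, 1, -1; 0, 3, 1]) {u v : Fin 3 →₀ ℕ}
    (h : Medge M u v) :
    (u 0 + u 1 + u 2 = v 0 + v 1 + v 2) ∨
      (4 ≤ u 0 + u 1 + u 2 ∧ 4 ≤ v 0 + v 1 + v 2) := by
  obtain ⟨j, h | h⟩ := h <;>
  · have e0 := h 0; have e1 := h 1; have e2 := h 2
    fin_cases j <;> simp [hM] at e0 e1 e2 <;> omega

lemma add_V3 (u : Fin 3 →₀ ℕ) (a b c : ℕ) :
    u + V3 a b c = V3 (u 0 + a) (u 1 + b) (u 2 + c) := by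
  apply ext3 <;> simp [Finsupp.add_apply]

noncomputable def bco (f : MvPolynomial (Fin 3) ℂ) (v : Fin 3 →₀ ℕ) : ℂ :=
  ((v 0).factorial : ℂ) * (v 1).factorial * (v 2).factorial * coeff v f

lemma fact3_ne (v : Fin 3 →₀ ℕ) :
    ((v 0).factorial : ℂ) * (v 1).factorial * (v 2).factorial ≠ 0 := by
  simp [Nat.factorial_ne_zero]

lemma derivCoeff_eq (m : Fin 3 →₀ ℕ) (f : MvPolynomial (Fin 3) ℂ) (u : Fin 3 →₀ ℕ) :
    ((u 0).factorial : ℂ) * (u 1).factorial * (u 2).factorial * derivCoeff m f u =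
      bco f (u + m) := by
  rw [derivCoeff, Fin.prod_univ_three, bco]
  rw [Finsupp.add_apply, Finsupp.add_apply, Finsupp.add_apply]
  have h0 : ((u 0).factorial : ℂ) ≠ 0 := Nat.cast_ne_zero.mpr (Nat.factorial_ne_zero _)
  have h1 : ((u 1).factorial : ℂ) ≠ 0 := Nat.cast_ne_zero.mpr (Nat.factorial_ne_zero _)
  have h2 : ((u 2).factorial : ℂ) ≠ 0 := Nat.cast_ne_zero.mpr (Nat.factorial_ne_zero _)
  field_simp

variable {M : Matrix (Fin 3) (Fin 3) ℤ}

lemma posPart_col0 (hM : M = !![1, -5, 0; -1, 1, -1; 0, 3, 1]) :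
    (_root_.posPart fun i => M i 0) = V3 1 0 0 := by
  apply ext3 <;> simp [_root_.posPart, hM]
lemma posPart_ncol0 (hM : M = !![1, -5, 0; -1, 1, -1; 0, 3, 1]) :
    (_root_.posPart fun i => -(M i 0)) = V3 0 1 0 := by
  apply ext3 <;> simp [_root_.posPart, hM]
lemma posPart_col1 (hM : M = !![1, -5, 0; -1, 1, -1; 0, 3, 1]) :
    (_root_.posPart fun i => M i 1) = V3 0 1 3 := by
  apply ext3 <;> simp [_root_.posPart, hM]
lemma posPart_ncol1 (hM : M = !![1, -5, 0; -1, 1, -1; 0, 3, 1]) :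
    (_root_.posPart fun i => -(M i 1)) = V3 5 0 0 := by
  apply ext3 <;> simp [_root_.posPart, hM]
lemma posPart_col2 (hM : M = !![1, -5, 0; -1, 1, -1; 0, 3, 1]) :
    (_root_.posPart fun i => M i 2) = V3 0 0 1 := by
  apply ext3 <;> simp [_root_.posPart, hM]
lemma posPart_ncol2 (hM : M = !![1, -5, 0; -1, 1, -1; 0, 3, 1]) :
    (_root_.posPart fun i => -(M i 2)) = V3 0 1 0 := by
  apply ext3 <;> simp [_root_.posPart, hM]

lemma isSolution_iff (hM : M = !![1, -5, 0; -1, 1, -1; 0, 3, 1])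
    (f : MvPolynomial (Fin 3) ℂ) : IsSolution M f ↔
    ((∀ u, bco f (u + V3 1 0 0) = bco f (u + V3 0 1 0)) ∧
     (∀ u, bco f (u + V3 0 1 3) = bco f (u + V3 5 0 0)) ∧
     (∀ u, bco f (u + V3 0 0 1) = bco f (u + V3 0 1 0))) := by
  have key : ∀ (m m' : Fin 3 →₀ ℕ) (u : Fin 3 →₀ ℕ),
      derivCoeff m f u = derivCoeff m' f u ↔ bco f (u + m) = bco f (u + m') := by
    intro m m' u
    rw [← derivCoeff_eq, ← derivCoeff_eq]
    exact (mul_right_inj' (fact3_ne u)).symm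
  constructor
  · intro H
    refine ⟨fun u => ?_, fun u => ?_, fun u => ?_⟩
    · have h := H 0 u
      rw [posPart_col0 hM, posPart_ncol0 hM] at h
      exact (key _ _ u).mp h
    · have h := H 1 u
      rw [posPart_col1 hM, posPart_ncol1 hM] at h
      exact (key _ _ u).mp h
    · have h := H 2 u
      rw [posPart_col2 hM, posPart_ncol2 hM] at h
      exact (key _ _ u).mp h
  · rintro ⟨h0, h1, h2⟩ j u
    fin_cases j
    · have : derivCoeff (_root_.posPart fun i => M i 0) f u
          = derivCoeff (_root_.posPart fun i => -(M i 0)) f u := by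
        rw [posPart_col0 hM, posPart_ncol0 hM]
        exact (key _ _ u).mpr (h0 u)
      exact this
    · have : derivCoeff (_root_.posPart fun i => M i 1) f u
          = derivCoeff (_root_.posPart fun i => -(M i 1)) f u := by
        rw [posPart_col1 hM, posPart_ncol1 hM]
        exact (key _ _ u).mpr (h1 u)
      exact this
    · have : derivCoeff (_root_.posPart fun i => M i 2) f u
          = derivCoeff (_root_.posPart fun i => -(M i 2)) f u := by
        rw [posPart_col2 hM, posPart_ncol2 hM]
        exact (key _ _ u).mpr (h2 u)
      exact this

lemma bco_canon (f : MvPolynomial (Fin 3) ℂ)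
    (h0 : ∀ u, bco f (u + V3 1 0 0) = bco f (u + V3 0 1 0))
    (h2 : ∀ u, bco f (u + V3 0 0 1) = bco f (u + V3 0 1 0)) :
    ∀ (k : ℕ) (v : Fin 3 →₀ ℕ), v 0 + v 2 = k →
      bco f v = bco f (V3 0 (v 0 + v 1 + v 2) 0) := by
  intro k
  induction k using Nat.strong_induction_on with
  | _ k IH =>
    intro v hv
    rcases Nat.eq_zero_or_pos (v 0) with hv0 | hv0
    · rcases Nat.eq_zero_or_pos (v 2) with hv2 | hv2
      · have hveq : v = V3 0 (v 0 + v 1 + v 2) 0 :=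
          ext3 (by simp; omega) (by simp; omega) (by simp; omega)
        rw [← hveq]
      · obtain ⟨k2, hk2⟩ : ∃ k2, v 2 = k2 + 1 := ⟨v 2 - 1, by omega⟩
        have e1 : v = V3 (v 0) (v 1) k2 + V3 0 0 1 := by
          rw [add_V3]; apply ext3 <;> simp [hk2]
        have e2 : V3 (v 0) (v 1) k2 + V3 0 1 0 = V3 (v 0) (v 1 + 1) k2 := by
          rw [add_V3]; apply ext3 <;> simp
        have step := h2 (V3 (v 0) (v 1) k2)
        rw [← e1, e2] at step
        have tail := IH (v 0 + k2) (by omega) (V3 (v 0) (v 1 + 1) k2) (by simp)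
        simp only [V3_apply0, V3_apply1, V3_apply2] at tail
        have harith : v 0 + (v 1 + 1) + k2 = v 0 + v 1 + v 2 := by omega
        rw [harith] at tail
        rw [step, tail]
    · obtain ⟨k0, hk0⟩ : ∃ k0, v 0 = k0 + 1 := ⟨v 0 - 1, by omega⟩
      have e1 : v = V3 k0 (v 1) (v 2) + V3 1 0 0 := by
        rw [add_V3]; apply ext3 <;> simp [hk0]
      have e2 : V3 k0 (v 1) (v 2) + V3 0 1 0 = V3 k0 (v 1 + 1) (v 2) := by
        rw [add_V3]; apply ext3 <;> simp
      have step := h0 (V3 k0 (v 1) (v 2))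
      rw [← e1, e2] at step
      have tail := IH (k0 + v 2) (by omega) (V3 k0 (v 1 + 1) (v 2)) (by simp)
      simp only [V3_apply0, V3_apply1, V3_apply2] at tail
      have harith : k0 + (v 1 + 1) + v 2 = v 0 + v 1 + v 2 := by omega
      rw [harith] at tail
      rw [step, tail]

lemma sum_support_eq (v : Fin 3 →₀ ℕ) : ∑ i ∈ v.support, v i = v 0 + v 1 + v 2 := by
  rw [Finset.sum_subset (Finset.subset_univ _)
    (fun x _ hx => by simpa [Finsupp.mem_support_iff] using hx)]
  exact Fin.sum_univ_three v

lemma coeff_zero_of_deg (f : MvPolynomial (Fin 3) ℂ) (v : Fin 3 →₀ ℕ)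
    (h : f.totalDegree < v 0 + v 1 + v 2) : coeff v f = 0 :=
  coeff_eq_zero_of_totalDegree_lt (by rwa [sum_support_eq])


lemma bco_sum (cc : Fin 4 → ℂ) (a b c : ℕ) :
    bco (∑ i : Fin 4, cc i • sp ^ (i : ℕ)) (V3 a b c) =
      if h : a + b + c < 4 then cc ⟨a + b + c, h⟩ * ((a + b + c).factorial : ℂ) else 0 := by
  rw [bco, coeff_sum, Finset.mul_sum]
  simp only [coeff_smul, smul_eq_mul, V3_apply0, V3_apply1, V3_apply2]
  have reorder : ∀ i : Fin 4,
      (a.factorial : ℂ) * b.factorial * c.factorial *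
        (cc i * coeff (V3 a b c) (sp ^ (i : ℕ))) =
      cc i * ((a.factorial : ℂ) * b.factorial * c.factorial *
        coeff (V3 a b c) (sp ^ (i : ℕ))) := fun i => by ring
  simp only [reorder, coeff_sp_pow]
  rw [Fin.sum_univ_four]
  have c0 : ((0 : Fin 4) : ℕ) = 0 := rfl
  have c1 : ((1 : Fin 4) : ℕ) = 1 := rfl
  have c2 : ((2 : Fin 4) : ℕ) = 2 := rfl
  have c3 : ((3 : Fin 4) : ℕ) = 3 := rfl
  simp only [c0, c1, c2, c3]
  by_cases h0 : a + b + c = 0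
  · simp [h0, Fin.mk_zero, Nat.factorial]
  by_cases h1 : a + b + c = 1
  · simp [h0, h1, Nat.factorial, show (⟨1, by omega⟩ : Fin 4) = 1 from rfl]
  by_cases h2 : a + b + c = 2
  · simp [h0, h1, h2, Nat.factorial, show (⟨2, by omega⟩ : Fin 4) = 2 from rfl]
  by_cases h3 : a + b + c = 3
  · simp [h0, h1, h2, h3, Nat.factorial, show (⟨3, by omega⟩ : Fin 4) = 3 from rfl]
  · simp [h0, h1, h2, h3, show ¬ (a + b + c < 4) by omega]
    intro ha hb hc; omega

end MAux

/-- For `M` with columns `(1,-1,0)`, `(-5,1,3)`, `(0,-1,1)`, the `M`-subgraphs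
of `ℕ³` are exactly the slices `{a+b+c = n}` for `n = 0,1,2,3` together with
the single unbounded set `{a+b+c ≥ 4}`; consequently the polynomial solutions
of `I(M)` are spanned by `1, x+y+z, (x+y+z)², (x+y+z)³`, which are linearly
independent, so the solution space is 4-dimensional. -/
theorem example_M_subgraphs_and_solutions
    (M : Matrix (Fin 3) (Fin 3) ℤ) (hM : M = !![1, -5, 0; -1, 1, -1; 0, 3, 1])
    (s : MvPolynomial (Fin 3) ℂ) (hs : s = X 0 + X 1 + X 2) :
    (∀ u : Fin 3 →₀ ℕ, u 0 + u 1 + u 2 ≤ 3 →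
      Mcomp M u = {v | v 0 + v 1 + v 2 = u 0 + u 1 + u 2}) ∧
    (∀ u : Fin 3 →₀ ℕ, 4 ≤ u 0 + u 1 + u 2 →
      Mcomp M u = {v | 4 ≤ v 0 + v 1 + v 2}) ∧
    (∀ f : MvPolynomial (Fin 3) ℂ, IsSolution M f ↔
      ∃ c : Fin 4 → ℂ, f = ∑ i : Fin 4, c i • s ^ (i : ℕ)) ∧
    LinearIndependent ℂ (fun i : Fin 4 => s ^ (i : ℕ)) := by
  classical
  have hsp : s = MAux.sp := by rw [hs]; rfl
  refine ⟨?_, ?_, ?_, ?_⟩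
  · -- bounded slices
    intro u hu
    ext v
    simp only [Mcomp, Set.mem_setOf_eq]
    constructor
    · intro h
      induction h with
      | refl => rfl
      | tail hab e ih =>
        have := MAux.edge_deg hM e
        omega
    · intro h
      exact MAux.reach_slice hM h.symm
  · -- unbounded component
    intro u hu
    ext v
    simp only [Mcomp, Set.mem_setOf_eq]
    constructor
    · intro h
      induction h with
      | refl => exact hu
      | tail hab e ih =>
        have := MAux.edge_deg hM e
        omega
    · intro hv
      have r1 := MAux.reach_canon hM _ u rfl
      have r2 := MAux.reach_canon hM _ v rfl
      rcases le_total (u 0 + u 1 + u 2) (v 0 + v 1 + v 2) with hle | hle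
      · have rup := MAux.reach_up hM (u 0 + u 1 + u 2) hu
          (v 0 + v 1 + v 2 - (u 0 + u 1 + u 2))
        rw [show u 0 + u 1 + u 2 + (v 0 + v 1 + v 2 - (u 0 + u 1 + u 2))
            = v 0 + v 1 + v 2 by omega] at rup
        exact (r1.trans rup).trans (MAux.reach_symm r2)
      · have rup := MAux.reach_up hM (v 0 + v 1 + v 2) hv
          (u 0 + u 1 + u 2 - (v 0 + v 1 + v 2))
        rw [show v 0 + v 1 + v 2 + (u 0 + u 1 + u 2 - (v 0 + v 1 + v 2))
            = u 0 + u 1 + u 2 by omega] at rup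
        exact r1.trans (MAux.reach_symm (r2.trans rup))
  · -- solutions
    intro f
    rw [MAux.isSolution_iff hM f, hsp]
    constructor
    · rintro ⟨h0, h1, h2⟩
      set Bn : ℕ → ℂ := fun n => MAux.bco f (MAux.V3 0 n 0) with hBn
      have hconst : ∀ v : Fin 3 →₀ ℕ, MAux.bco f v = Bn (v 0 + v 1 + v 2) := by
        intro v
        have := MAux.bco_canon f h0 h2 _ v rfl
        rw [this, hBn]
      have hstep : ∀ n, Bn (n + 4) = Bn (n + 5) := by
        intro n
        have key := h1 (MAux.V3 0 n 0)
        rw [MAux.add_V3, MAux.add_V3] at key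
        simp only [MAux.V3_apply0, MAux.V3_apply1, MAux.V3_apply2] at key
        have l := hconst (MAux.V3 (0 + 0) (n + 1) (0 + 3))
        have r := hconst (MAux.V3 (0 + 5) (n + 0) (0 + 0))
        simp only [MAux.V3_apply0, MAux.V3_apply1, MAux.V3_apply2] at l r
        rw [l, r] at key
        rw [show 0 + 0 + (n + 1) + (0 + 3) = n + 4 by omega,
          show 0 + 5 + (n + 0) + (0 + 0) = n + 5 by omega] at key
        exact key
      have hvanish : ∀ n, 4 ≤ n → Bn n = 0 := by
        have big : ∀ n, f.totalDegree < n → Bn n = 0 := by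
          intro n hn
          show MAux.bco f _ = 0
          rw [MAux.bco, MAux.coeff_zero_of_deg f _ (by simpa using hn), mul_zero]
        have up : ∀ k n, 4 ≤ n → Bn n = Bn (n + k) := by
          intro k
          induction k with
          | zero => simp
          | succ k IHk =>
            intro n hn
            rw [IHk n hn]
            have := hstep (n + k - 4)
            rw [show n + k - 4 + 4 = n + k by omega,
              show n + k - 4 + 5 = n + (k + 1) by omega] at this
            exact this
        intro n hn
        rw [up (f.totalDegree + 1) n hn]
        exact big _ (by omega)
      refine ⟨fun i => Bn (i : ℕ) / ((i : ℕ).factorial : ℂ), ?_⟩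
      apply MvPolynomial.ext
      intro m
      have R := MAux.bco_sum (fun i => Bn (i : ℕ) / ((i : ℕ).factorial : ℂ))
        (m 0) (m 1) (m 2)
      rw [← MAux.v_eq_V3 m] at R
      have L := hconst m
      have main : MAux.bco f m
          = MAux.bco (∑ i : Fin 4, (Bn (i : ℕ) / ((i : ℕ).factorial : ℂ)) • MAux.sp ^ (i : ℕ)) m := by
        rw [L, R]
        by_cases hd : m 0 + m 1 + m 2 < 4
        · rw [dif_pos hd]
          have hv : ((⟨m 0 + m 1 + m 2, hd⟩ : Fin 4) : ℕ) = m 0 + m 1 + m 2 := rfl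
          rw [hv, div_mul_cancel₀]
          exact Nat.cast_ne_zero.mpr (Nat.factorial_ne_zero _)
        · rw [dif_neg hd]
          exact hvanish _ (by omega)
      have := main
      rw [MAux.bco, MAux.bco] at this
      exact mul_left_cancel₀ (MAux.fact3_ne m) this
    · rintro ⟨c, rfl⟩
      refine ⟨fun u => ?_, fun u => ?_, fun u => ?_⟩
      · rw [MAux.add_V3, MAux.add_V3, MAux.bco_sum, MAux.bco_sum]
        rw [show u 0 + 1 + (u 1 + 0) + (u 2 + 0)
            = u 0 + 0 + (u 1 + 1) + (u 2 + 0) by omega]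
      · rw [MAux.add_V3, MAux.add_V3, MAux.bco_sum, MAux.bco_sum]
        rw [dif_neg (by omega), dif_neg (by omega)]
      · rw [MAux.add_V3, MAux.add_V3, MAux.bco_sum, MAux.bco_sum]
        rw [show u 0 + 0 + (u 1 + 0) + (u 2 + 1)
            = u 0 + 0 + (u 1 + 1) + (u 2 + 0) by omega]
  · -- linear independence
    rw [Fintype.linearIndependent_iff]
    intro g hg i
    rw [hsp] at hg
    have key := MAux.bco_sum g 0 (i : ℕ) 0
    rw [hg] at key
    have z : MAux.bco (0 : MvPolynomial (Fin 3) ℂ) (MAux.V3 0 (i : ℕ) 0) = 0 := by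
      rw [MAux.bco, coeff_zero, mul_zero]
    rw [z] at key
    have hlt : 0 + (i : ℕ) + 0 < 4 := by omega
    rw [dif_pos hlt] at key
    have hi : (⟨0 + (i : ℕ) + 0, hlt⟩ : Fin 4) = i := Fin.ext (by simp)
    rw [hi] at key
    have := key.symm
    rcases mul_eq_zero.mp this with h | h
    · exact h
    · exact absurd h (Nat.cast_ne_zero.mpr (Nat.factorial_ne_zero _))
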